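/- Let c > 0 and let k, k₁, k₂, l, l₀, l₁, l₂ be real numbers with k₁ ≥ 0, k₂ ≥ 0, k₁ + k₂ ≤ k, 1 ≤ l₁ ≤ 2l/3, 1 ≤ l₂ ≤ 2l/3, 0 ≤ l₀ ≤ c·√k, l ≥ 2, and l ≤ 2k. Then 4c·k₁^{3/2}·log₂ l₁ + 4c·k₂^{3/2}·log₂ l₂ + l₀·l ≤ 4c·k^{3/2}·log₂ l. -/
import Mathlib


open Set


/-- The key numerical estimate in the induction: with `c > 0`, `k₁, k₂ ≥ 0`,
`k₁ + k₂ ≤ k`, `1 ≤ l₁ ≤ 2l/3`, `1 ≤ l₂ ≤ 2l/3`, `0 ≤ l₀ ≤ c√k`, `l ≥ 2` and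
`l ≤ 2k`, we get
`4c·k₁^(3/2)·log₂ l₁ + 4c·k₂^(3/2)·log₂ l₂ + l₀·l ≤ 4c·k^(3/2)·log₂ l`. -/
theorem induction_step_estimate (c k k₁ k₂ l l₀ l₁ l₂ : ℝ) (hc : 0 < c)
    (hk₁ : 0 ≤ k₁) (hk₂ : 0 ≤ k₂) (hk : k₁ + k₂ ≤ k)
    (hl₁ : 1 ≤ l₁) (hl₁' : l₁ ≤ 2 * l / 3)
    (hl₂ : 1 ≤ l₂) (hl₂' : l₂ ≤ 2 * l / 3)
    (hl₀ : 0 ≤ l₀) (hl₀' : l₀ ≤ c * Real.sqrt k)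
    (hl : 2 ≤ l) (hlk : l ≤ 2 * k) :
    4 * c * k₁ ^ ((3 : ℝ) / 2) * Real.logb 2 l₁ +
      4 * c * k₂ ^ ((3 : ℝ) / 2) * Real.logb 2 l₂ + l₀ * l ≤
      4 * c * k ^ ((3 : ℝ) / 2) * Real.logb 2 l := by
  have hk0 : (0:ℝ) ≤ k := le_trans (by linarith) hk
  have hk1 : (1:ℝ) ≤ k := by linarith
  have hr : ∀ x : ℝ, 0 ≤ x → x ^ ((3:ℝ)/2) = x * Real.sqrt x := by
    intro x hx
    rw [show (3:ℝ)/2 = 1 + 1/2 by norm_num, Real.rpow_add' hx (by norm_num),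
      Real.rpow_one, Real.sqrt_eq_rpow]
  rw [hr k₁ hk₁, hr k₂ hk₂, hr k hk0]
  set d := Real.logb 2 (3/2) with hd
  set L := Real.logb 2 l with hL
  have hd2 : (1:ℝ)/2 ≤ d := by
    rw [hd, Real.le_logb_iff_rpow_le (by norm_num) (by norm_num), ← Real.sqrt_eq_rpow]
    nlinarith [Real.sq_sqrt (by norm_num : (0:ℝ) ≤ 2), Real.sqrt_nonneg 2]
  have hsplit : Real.logb 2 (2 * l / 3) = L - d := by
    have h23 : 2 * l / 3 = l / (3/2) := by ring
    rw [h23, hL, hd, Real.logb_div (by linarith) (by norm_num)]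
  have hA : Real.logb 2 l₁ ≤ L - d := by
    rw [← hsplit]; exact Real.logb_le_logb_of_le (by norm_num) (by linarith) hl₁'
  have hB : Real.logb 2 l₂ ≤ L - d := by
    rw [← hsplit]; exact Real.logb_le_logb_of_le (by norm_num) (by linarith) hl₂'
  have hA0 : 0 ≤ Real.logb 2 l₁ := Real.logb_nonneg (by norm_num) hl₁
  have hB0 : 0 ≤ Real.logb 2 l₂ := Real.logb_nonneg (by norm_num) hl₂
  have hLd : 0 ≤ L - d := le_trans hA0 hA
  have hs1 : Real.sqrt k₁ ≤ Real.sqrt k := Real.sqrt_le_sqrt (by linarith)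
  have hs2 : Real.sqrt k₂ ≤ Real.sqrt k := Real.sqrt_le_sqrt (by linarith)
  have hs10 : 0 ≤ Real.sqrt k₁ := Real.sqrt_nonneg _
  have hs20 : 0 ≤ Real.sqrt k₂ := Real.sqrt_nonneg _
  have hs0 : 0 ≤ Real.sqrt k := Real.sqrt_nonneg _
  have hsup : k₁ * Real.sqrt k₁ + k₂ * Real.sqrt k₂ ≤ k * Real.sqrt k := by
    nlinarith
  have hp10 : 0 ≤ k₁ * Real.sqrt k₁ := mul_nonneg hk₁ hs10
  have hp20 : 0 ≤ k₂ * Real.sqrt k₂ := mul_nonneg hk₂ hs20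
  have h4cn : (0:ℝ) ≤ 4 * c := by linarith
  have h1 : 4 * c * (k₁ * Real.sqrt k₁) * Real.logb 2 l₁ ≤
      4 * c * (k₁ * Real.sqrt k₁) * (L - d) :=
    mul_le_mul_of_nonneg_left hA (by positivity)
  have h2 : 4 * c * (k₂ * Real.sqrt k₂) * Real.logb 2 l₂ ≤
      4 * c * (k₂ * Real.sqrt k₂) * (L - d) :=
    mul_le_mul_of_nonneg_left hB (by positivity)
  have h3 : 4 * c * (k₁ * Real.sqrt k₁ + k₂ * Real.sqrt k₂) * (L - d) ≤
      4 * c * (k * Real.sqrt k) * (L - d) :=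
    mul_le_mul_of_nonneg_right (mul_le_mul_of_nonneg_left hsup h4cn) hLd
  have h5 : l₀ * l ≤ (c * Real.sqrt k) * (2 * k) :=
    mul_le_mul hl₀' hlk (by linarith) (mul_nonneg hc.le hs0)
  have h5' : (c * Real.sqrt k) * (2 * k) = 2 * c * (k * Real.sqrt k) := by ring
  have hK0 : 0 ≤ k * Real.sqrt k := mul_nonneg hk0 hs0
  have h6 : 4 * c * (k * Real.sqrt k) * (1/2) ≤ 4 * c * (k * Real.sqrt k) * d :=
    mul_le_mul_of_nonneg_left hd2 (by positivity)
  have h4 : l₀ * l ≤ 4 * c * (k * Real.sqrt k) * d := by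
    have : 4 * c * (k * Real.sqrt k) * (1/2) = 2 * c * (k * Real.sqrt k) := by ring
    linarith
  have e1 : 4 * c * (k₁ * Real.sqrt k₁ + k₂ * Real.sqrt k₂) * (L - d) =
      4 * c * (k₁ * Real.sqrt k₁) * (L - d) + 4 * c * (k₂ * Real.sqrt k₂) * (L - d) := by ring
  have e2 : 4 * c * (k * Real.sqrt k) * (L - d) + 4 * c * (k * Real.sqrt k) * d =
      4 * c * (k * Real.sqrt k) * L := by ring
  linarith
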